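/- Let C_1,...,C_m be d_1 × d_1 complex matrices and D_1,...,D_m be d_2 × d_2 complex matrices. Then trace[(∑_i C_i ⊗ D_i)(∑_j C_j† ⊗ D_j†)] ≤ trace[∑_i C_i C_i†] · trace[∑_j D_j D_j†]. -/

import Mathlib

open Matrix
open scoped Kronecker ComplexOrder

lemma aux_cs {m : ℕ} (x y : Fin m → ℂ) :
    Complex.normSq (∑ i, x i * y i) ≤
      (∑ i, Complex.normSq (x i)) * (∑ i, Complex.normSq (y i)) := by
  have h1 : ‖∑ i, x i * y i‖ ≤ ∑ i, ‖x i‖ * ‖y i‖ := by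
    refine (norm_sum_le _ _).trans_eq ?_
    simp [_root_.map_mul]
  have h2 : (∑ i, ‖x i‖ * ‖y i‖) ^ 2 ≤
      (∑ i, ‖x i‖ ^ 2) * (∑ i, ‖y i‖ ^ 2) :=
    Finset.sum_mul_sq_le_sq_mul_sq _ _ _
  calc Complex.normSq (∑ i, x i * y i)
      = ‖∑ i, x i * y i‖ ^ 2 := (Complex.sq_norm _).symm
    _ ≤ (∑ i, ‖x i‖ * ‖y i‖) ^ 2 := by
        apply pow_le_pow_left₀ (norm_nonneg _) h1
    _ ≤ (∑ i, ‖x i‖ ^ 2) * (∑ i, ‖y i‖ ^ 2) := h2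
    _ = _ := by simp [Complex.sq_norm]

lemma aux_kron_conjT {d₁ d₂ : ℕ} (A : Matrix (Fin d₁) (Fin d₁) ℂ)
    (B : Matrix (Fin d₂) (Fin d₂) ℂ) : (A ⊗ₖ B)ᴴ = Aᴴ ⊗ₖ Bᴴ := by
  ext ⟨a, b⟩ ⟨c, d⟩
  simp [Matrix.conjTranspose_apply, star_mul']

lemma aux_trace_mul_conjT {n : Type*} [Fintype n] (M : Matrix n n ℂ) :
    Matrix.trace (M * Mᴴ) = ((∑ p, ∑ q, Complex.normSq (M p q) : ℝ) : ℂ) := by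
  simp [Matrix.trace, Matrix.diag, Matrix.mul_apply, Matrix.conjTranspose_apply,
    Complex.mul_conj, Complex.ofReal_sum]

theorem trace_kronecker_cauchy_schwarz (d₁ d₂ m : ℕ)
    (C : Fin m → Matrix (Fin d₁) (Fin d₁) ℂ)
    (D : Fin m → Matrix (Fin d₂) (Fin d₂) ℂ) :
    Matrix.trace ((∑ i, C i ⊗ₖ D i) * (∑ j, (C j)ᴴ ⊗ₖ (D j)ᴴ)) ≤
      Matrix.trace (∑ i, C i * (C i)ᴴ) * Matrix.trace (∑ j, D j * (D j)ᴴ) := by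
  have hM : (∑ j, (C j)ᴴ ⊗ₖ (D j)ᴴ) = (∑ i, C i ⊗ₖ D i)ᴴ := by
    rw [Matrix.conjTranspose_sum]
    exact Finset.sum_congr rfl fun j _ => (aux_kron_conjT _ _).symm
  have hL : Matrix.trace ((∑ i, C i ⊗ₖ D i) * (∑ j, (C j)ᴴ ⊗ₖ (D j)ᴴ))
      = ((∑ a, ∑ b, ∑ c, ∑ d, Complex.normSq (∑ i, C i a c * D i b d) : ℝ) : ℂ) := by
    rw [hM, aux_trace_mul_conjT]
    congr 1
    rw [Fintype.sum_prod_type]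
    refine Finset.sum_congr rfl fun a _ => Finset.sum_congr rfl fun b _ => ?_
    rw [Fintype.sum_prod_type]
    refine Finset.sum_congr rfl fun c _ => Finset.sum_congr rfl fun d _ => ?_
    congr 1
    simp [Matrix.sum_apply]
  have hC : Matrix.trace (∑ i, C i * (C i)ᴴ)
      = ((∑ i, ∑ a, ∑ c, Complex.normSq (C i a c) : ℝ) : ℂ) := by
    rw [Matrix.trace_sum]
    simp_rw [aux_trace_mul_conjT]
    rw [Complex.ofReal_sum]
  have hD : Matrix.trace (∑ j, D j * (D j)ᴴ)
      = ((∑ j, ∑ b, ∑ d, Complex.normSq (D j b d) : ℝ) : ℂ) := by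
    rw [Matrix.trace_sum]
    simp_rw [aux_trace_mul_conjT]
    rw [Complex.ofReal_sum]
  rw [hL, hC, hD, ← Complex.ofReal_mul, Complex.real_le_real]
  calc ∑ a, ∑ b, ∑ c, ∑ d, Complex.normSq (∑ i, C i a c * D i b d)
      ≤ ∑ a, ∑ b, ∑ c, ∑ d,
        (∑ i, Complex.normSq (C i a c)) * (∑ i, Complex.normSq (D i b d)) := by
        refine Finset.sum_le_sum fun a _ => Finset.sum_le_sum fun b _ =>
          Finset.sum_le_sum fun c _ => Finset.sum_le_sum fun d _ => ?_
        exact aux_cs _ _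
    _ = (∑ i, ∑ a, ∑ c, Complex.normSq (C i a c)) *
        (∑ j, ∑ b, ∑ d, Complex.normSq (D j b d)) := by
        simp_rw [← Finset.mul_sum, ← Finset.sum_mul]
        rw [← Finset.sum_mul_sum]
        congr 1
        · exact (Finset.sum_congr rfl fun a _ => Finset.sum_comm).trans Finset.sum_comm
        · exact (Finset.sum_congr rfl fun b _ => Finset.sum_comm).trans Finset.sum_comm
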